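/- (Lemma 3) Let G^s be an SCG, let X ≠ Y be macro vertices, let 𝕎 be a set of macro vertices with X, Y ∉ 𝕎 that satisfies Conditions 1–3 of the SCG-front-door criterion relative to (X_{t−γ}, Y_t), where 0 ≤ γ ≤ γmax, t0 ≤ t − γ − γmax and t ≤ tmax. If Cycles(X, G^s) = {X → X} (the self-loop is the only directed cycle containing X) and there is no macro vertex Z ∈ Anc(X, G^s) with X ↔ Z in G^s, then for every W_{t−λ} ∈ {W_{t−γ+ℓ} : W ∈ 𝕎, 0 ≤ ℓ ≤ γ} and every candidate FT-ADMG G ∈ C(G^s), the micro-vertex set {B_{t−γ−ℓ} : 0 ≤ ℓ ≤ γmax, B ∈ Par(X, G^s) \ {X}} ∪ {X_{t−γ−ℓ} : 1 ≤ ℓ ≤ γmax} blocks every back-door path from X_{t−γ} to W_{t−λ} in G and contains no descendant of X_{t−γ} in G. -/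

import Mathlib

/-!
Common definitions: mixed paths, full-time acyclic directed mixed graphs (FT-ADMGs),
summary causal graphs (SCGs), candidate FT-ADMGs, and the SCG-front-door conditions.

Micro vertices are pairs `(i, t) : Fin d × ℤ` (time series index, time);
macro vertices are elements of `Fin d`.
-/

/-- The type of an edge as traversed on a path of a mixed graph:
`fwd` = directed edge pointing towards the next vertex, `bwd` = directed edge
pointing towards the previous vertex, `bid` = bidirected edge. -/
inductive EdgeT : Type
  | fwd
  | bwd
  | bid
  deriving DecidableEq

/-- The edge (as traversed left-to-right) has an arrowhead at its right endpoint. -/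
def EdgeT.headRight : EdgeT → Prop
  | .fwd => True
  | .bwd => False
  | .bid => True

/-- The edge (as traversed left-to-right) has an arrowhead at its left endpoint. -/
def EdgeT.headLeft : EdgeT → Prop
  | .fwd => False
  | .bwd => True
  | .bid => True

/-- A path (sequence of distinct vertices, successive ones joined by an edge) in a
mixed graph with directed relation `dir` and bidirected relation `bi`. -/
structure MPath (V : Type) (dir bi : V → V → Prop) (n : ℕ) where
  v : Fin (n + 1) → V
  e : Fin n → EdgeT
  inj : Function.Injective v
  valid_fwd : ∀ k : Fin n, e k = .fwd → dir (v k.castSucc) (v k.succ)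
  valid_bwd : ∀ k : Fin n, e k = .bwd → dir (v k.succ) (v k.castSucc)
  valid_bid : ∀ k : Fin n, e k = .bid → bi (v k.castSucc) (v k.succ)

namespace MPath

variable {V : Type} {dir bi : V → V → Prop} {n : ℕ}

/-- A directed path: all edges are directed towards the last vertex. -/
def IsDirected (p : MPath V dir bi n) : Prop :=
  ∀ k : Fin n, p.e k = EdgeT.fwd

/-- The internal vertex at position `i` is a collider: both path edges at it
have an arrowhead at it. -/
def Collider (p : MPath V dir bi n) (i : ℕ) (h1 : 0 < i) (h2 : i < n) : Prop :=
  (p.e ⟨i - 1, by omega⟩).headRight ∧ (p.e ⟨i, h2⟩).headLeft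

/-- The path contains no collider (hence it is active given the empty set). -/
def ColliderFree (p : MPath V dir bi n) : Prop :=
  ∀ (i : ℕ) (h1 : 0 < i) (h2 : i < n), ¬ p.Collider i h1 h2

/-- The path is blocked by the set `Z`: some non-collider on the path belongs to `Z`,
or some collider on the path has no descendant in `Z`. -/
def BlockedBy (p : MPath V dir bi n) (Z : Set V) : Prop :=
  ∃ (i : ℕ) (h1 : 0 < i) (h2 : i < n),
    (¬ p.Collider i h1 h2 ∧ p.v ⟨i, by omega⟩ ∈ Z) ∨
    (p.Collider i h1 h2 ∧ ∀ w, Relation.ReflTransGen dir (p.v ⟨i, by omega⟩) w → w ∉ Z)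

end MPath

/-- A full-time acyclic directed mixed graph over `d` time series, time window
`{t0, …, tmax}` and maximal lag `γmax`: directed edges go forward in time with lag
at most `γmax`, the directed part is acyclic, and the graph is stationary. -/
structure FTADMG (d : ℕ) (t0 tmax : ℤ) (γmax : ℕ) where
  dir : Fin d × ℤ → Fin d × ℤ → Prop
  bi : Fin d × ℤ → Fin d × ℤ → Prop
  dir_window : ∀ a b, dir a b → t0 ≤ a.2 ∧ a.2 ≤ tmax ∧ t0 ≤ b.2 ∧ b.2 ≤ tmax
  dir_time : ∀ a b, dir a b → a.2 ≤ b.2 ∧ b.2 - a.2 ≤ (γmax : ℤ)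
  bi_window : ∀ a b, bi a b → t0 ≤ a.2 ∧ a.2 ≤ tmax ∧ t0 ≤ b.2 ∧ b.2 ≤ tmax
  bi_symm : ∀ a b, bi a b → bi b a
  acyclic : ∀ a, ¬ Relation.TransGen dir a a
  stat_dir : ∀ (i j : Fin d) (t' t δ : ℤ),
    t0 ≤ t' → t' ≤ tmax → t0 ≤ t → t ≤ tmax →
    t0 ≤ t' + δ → t' + δ ≤ tmax → t0 ≤ t + δ → t + δ ≤ tmax →
    (dir (i, t') (j, t) ↔ dir (i, t' + δ) (j, t + δ))
  stat_bi : ∀ (i j : Fin d) (t' t δ : ℤ),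
    t0 ≤ t' → t' ≤ tmax → t0 ≤ t → t ≤ tmax →
    t0 ≤ t' + δ → t' + δ ≤ tmax → t0 ≤ t + δ → t + δ ≤ tmax →
    (bi (i, t') (j, t) ↔ bi (i, t' + δ) (j, t + δ))

/-- A summary causal graph over `d` time series (macro vertices). -/
structure SCG (d : ℕ) where
  dir : Fin d → Fin d → Prop
  bi : Fin d → Fin d → Prop

/-- `G` is a candidate FT-ADMG for the SCG `Gs`: the SCG compatible with `G` is `Gs`. -/
def IsCandidate {d : ℕ} {t0 tmax : ℤ} {γmax : ℕ} (Gs : SCG d)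
    (G : FTADMG d t0 tmax γmax) : Prop :=
  (∀ i j : Fin d, Gs.dir i j ↔ ∃ t' t : ℤ, G.dir (i, t') (j, t)) ∧
  (∀ i j : Fin d, Gs.bi i j ↔ ∃ t' t : ℤ, G.bi (i, t') (j, t))

namespace SCG

variable {d : ℕ}

/-- The path `p` (with `p.v 0 = X`) is a back-door path: it starts with
`X ←`, `X ↔`, or `X ⇄`. -/
def BackdoorStart (Gs : SCG d) {n : ℕ} (p : MPath (Fin d) Gs.dir Gs.bi n)
    (hn : 0 < n) : Prop :=
  p.e ⟨0, hn⟩ = EdgeT.bwd ∨ p.e ⟨0, hn⟩ = EdgeT.bid ∨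
    (p.e ⟨0, hn⟩ = EdgeT.fwd ∧ Gs.dir (p.v ⟨1, by omega⟩) (p.v 0))

/-- Strict collider at internal position `i` of an SCG path: configuration `→ C ←`,
and not `⇄ C ←` nor `→ C ⇄`. -/
def StrictCollider (Gs : SCG d) {n : ℕ} (p : MPath (Fin d) Gs.dir Gs.bi n)
    (i : ℕ) (h1 : 0 < i) (h2 : i < n) : Prop :=
  p.e ⟨i - 1, by omega⟩ = EdgeT.fwd ∧ p.e ⟨i, h2⟩ = EdgeT.bwd ∧
  ¬ Gs.dir (p.v ⟨i, by omega⟩) (p.v ⟨i - 1, by omega⟩) ∧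
  ¬ Gs.dir (p.v ⟨i, by omega⟩) (p.v ⟨i + 1, by omega⟩)

/-- Strict non-collider at internal position `i` of an SCG path:
configuration `→ C →`, `← C →`, or `← C ⇄`, and not `⇄ C ←`. -/
def StrictNonCollider (Gs : SCG d) {n : ℕ} (p : MPath (Fin d) Gs.dir Gs.bi n)
    (i : ℕ) (h1 : 0 < i) (h2 : i < n) : Prop :=
  (p.e ⟨i - 1, by omega⟩ = EdgeT.fwd ∧ p.e ⟨i, h2⟩ = EdgeT.fwd) ∨
  (p.e ⟨i - 1, by omega⟩ = EdgeT.bwd ∧ p.e ⟨i, h2⟩ = EdgeT.fwd) ∨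
  (p.e ⟨i - 1, by omega⟩ = EdgeT.bwd ∧ p.e ⟨i, h2⟩ = EdgeT.bwd ∧
    Gs.dir (p.v ⟨i, by omega⟩) (p.v ⟨i + 1, by omega⟩))

/-- The SCG path is activated by the empty set: it contains no strict collider. -/
def ActiveEmpty (Gs : SCG d) {n : ℕ} (p : MPath (Fin d) Gs.dir Gs.bi n) : Prop :=
  ∀ (i : ℕ) (h1 : 0 < i) (h2 : i < n), ¬ Gs.StrictCollider p i h1 h2

/-- The SCG back-door path `p` is blocked by `{X}`: it contains a strict collider `C`
with `X ∉ Desc(C, Gs)`, or it contains `X` as a strict non-collider together with a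
directed edge from `X` to a vertex on the path that does not form a directed cycle
with `X`. -/
def BlockedByOne (Gs : SCG d) {n : ℕ} (p : MPath (Fin d) Gs.dir Gs.bi n)
    (X : Fin d) : Prop :=
  (∃ (i : ℕ) (h1 : 0 < i) (h2 : i < n),
    Gs.StrictCollider p i h1 h2 ∧
      ¬ Relation.ReflTransGen Gs.dir (p.v ⟨i, by omega⟩) X) ∨
  (∃ (i : ℕ) (h1 : 0 < i) (h2 : i < n),
    p.v ⟨i, by omega⟩ = X ∧ Gs.StrictNonCollider p i h1 h2 ∧
      ∃ j : Fin (n + 1), Gs.dir X (p.v j) ∧ ¬ Relation.ReflTransGen Gs.dir (p.v j) X)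

/-- Condition 1 of the SCG-front-door criterion:
`Ws` intercepts every directed path from `X` to `Y` in `Gs`. -/
def Cond1 (Gs : SCG d) (X Y : Fin d) (Ws : Set (Fin d)) : Prop :=
  ∀ (n : ℕ) (p : MPath (Fin d) Gs.dir Gs.bi n),
    p.IsDirected → p.v 0 = X → p.v (Fin.last n) = Y → ∃ i, p.v i ∈ Ws

/-- Condition 2 of the SCG-front-door criterion:
no back-door path from `X` to a vertex of `Ws` in `Gs` is activated by the empty set. -/
def Cond2 (Gs : SCG d) (X : Fin d) (Ws : Set (Fin d)) : Prop :=
  ∀ (n : ℕ) (hn : 0 < n) (p : MPath (Fin d) Gs.dir Gs.bi n),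
    p.v 0 = X → p.v (Fin.last n) ∈ Ws → Gs.BackdoorStart p hn → ¬ Gs.ActiveEmpty p

/-- Condition 3 of the SCG-front-door criterion:
every back-door path from a vertex of `Ws` to `Y` in `Gs` is blocked by `{X}`. -/
def Cond3 (Gs : SCG d) (X Y : Fin d) (Ws : Set (Fin d)) : Prop :=
  ∀ (n : ℕ) (hn : 0 < n) (p : MPath (Fin d) Gs.dir Gs.bi n),
    p.v 0 ∈ Ws → p.v (Fin.last n) = Y → Gs.BackdoorStart p hn → Gs.BlockedByOne p X

/-- Conditions 1–3 of the SCG-front-door criterion relative to `(X_{t-γ}, Y_t)`. -/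
def FrontDoor123 (Gs : SCG d) (X Y : Fin d) (Ws : Set (Fin d)) : Prop :=
  Gs.Cond1 X Y Ws ∧ Gs.Cond2 X Ws ∧ Gs.Cond3 X Y Ws

end SCG

/-- The micro-vertex set `F = {W_{t-γ+ℓ} : W ∈ Ws, 0 ≤ ℓ ≤ γ}`. -/
def Fset {d : ℕ} (Ws : Set (Fin d)) (t : ℤ) (γ : ℕ) : Set (Fin d × ℤ) :=
  {a | a.1 ∈ Ws ∧ ∃ ℓ : ℤ, 0 ≤ ℓ ∧ ℓ ≤ (γ : ℤ) ∧ a.2 = t - (γ : ℤ) + ℓ}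

/-- The conditioning set of Lemma 3:
`{B_{t-γ-ℓ} : 0 ≤ ℓ ≤ γmax, B ∈ Par(X, Gs) \ {X}} ∪ {X_{t-γ-ℓ} : 1 ≤ ℓ ≤ γmax}`. -/
def lemma3Set {d : ℕ} (Gs : SCG d) (X : Fin d) (t : ℤ) (γ γmax : ℕ) :
    Set (Fin d × ℤ) :=
  {a | ∃ ℓ : ℤ, 0 ≤ ℓ ∧ ℓ ≤ (γmax : ℤ) ∧ a.2 = t - (γ : ℤ) - ℓ ∧
    Gs.dir a.1 X ∧ a.1 ≠ X} ∪
  {a | ∃ ℓ : ℤ, 1 ≤ ℓ ∧ ℓ ≤ (γmax : ℤ) ∧ a = (X, t - (γ : ℤ) - ℓ)}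

section Helpers
variable {V : Type} {r : V → V → Prop}

lemma chain_mem_reach : ∀ (l : List V) (c : V), List.Chain r c l → ∀ x ∈ l, Relation.ReflTransGen r c x := by
  intro l
  induction l with
  | nil => intro c _ x hx; simp at hx
  | cons b tl ih =>
    intro c hch x hx
    have hch : r c b ∧ List.Chain r b tl := List.chain_cons.mp hch
    rcases List.mem_cons.mp hx with rfl | hx'
    · exact Relation.ReflTransGen.single hch.1
    · exact Relation.ReflTransGen.trans (Relation.ReflTransGen.single hch.1) (ih b hch.2 x hx')

lemma chain_mem_suffix : ∀ (l : List V) (c a : V), List.Chain r c l → a ∈ c :: l →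
    ∃ l', List.Chain r a l' ∧ (a :: l') <:+ (c :: l) := by
  intro l
  induction l with
  | nil =>
    intro c a _ ha
    simp only [List.mem_singleton] at ha
    subst ha
    exact ⟨[], List.Chain.nil, List.suffix_refl _⟩
  | cons b tl ih =>
    intro c a hch ha
    rcases List.mem_cons.mp ha with rfl | ha'
    · exact ⟨b :: tl, hch, List.suffix_refl _⟩
    · have hch : r c b ∧ List.Chain r b tl := List.chain_cons.mp hch
      obtain ⟨l', h1, h2⟩ := ih b a hch.2 ha'
      exact ⟨l', h1, h2.trans (List.suffix_cons c (b :: tl))⟩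

lemma getLast_of_suffix {l₁ l₂ : List V} (h : l₁ <:+ l₂) (h1 : l₁ ≠ []) (h2 : l₂ ≠ []) :
    l₁.getLast h1 = l₂.getLast h2 := by
  obtain ⟨s, rfl⟩ := h
  exact (List.getLast_append_of_right_ne_nil s l₁ h1).symm

lemma exists_nodup_chain {a b : V} (h : Relation.ReflTransGen r a b) :
    ∃ l : List V, List.Chain r a l ∧ (a :: l).getLast (List.cons_ne_nil _ _) = b ∧ (a :: l).Nodup := by
  induction h using Relation.ReflTransGen.head_induction_on with
  | refl => exact ⟨[], List.Chain.nil, rfl, List.nodup_singleton b⟩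
  | head h' h ih =>
    rename_i x c
    obtain ⟨l, hch, hlast, hnd⟩ := ih
    by_cases hmem : x ∈ c :: l
    · obtain ⟨l', h1, h2⟩ := chain_mem_suffix l c x hch hmem
      exact ⟨l', h1, (getLast_of_suffix h2 _ _).trans hlast, hnd.sublist h2.sublist⟩
    · exact ⟨c :: l, List.Chain.cons h' hch,
        by rw [List.getLast_cons_cons]; exact hlast, List.nodup_cons.mpr ⟨hmem, hnd⟩⟩

end Helpers

lemma cond2_single_bwd {d : ℕ} (Gs : SCG d) (X : Fin d) (Ws : Set (Fin d)) (hc2 : Gs.Cond2 X Ws)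
    (W : Fin d) (hW : W ∈ Ws) (hXW : X ≠ W) (hWX : Gs.dir W X) : False := by
  let p : MPath (Fin d) Gs.dir Gs.bi 1 :=
    { v := ![X, W]
      e := fun _ => EdgeT.bwd
      inj := by intro i j hij; fin_cases i <;> fin_cases j <;> simp_all
      valid_fwd := by intro k hk; simp at hk
      valid_bwd := by
        intro k _
        fin_cases k
        simpa using hWX
      valid_bid := by intro k hk; simp at hk }
  have h := hc2 1 one_pos p (by simp [p]) (by simpa [p, Fin.last] using hW) (Or.inl rfl)
  exact h (fun i h1 h2 => absurd h2 (by omega))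

lemma cond2_contra {d : ℕ} (Gs : SCG d) (X : Fin d) (Ws : Set (Fin d)) (hc2 : Gs.Cond2 X Ws)
    (Z1 W : Fin d) (hbi : Gs.bi X Z1) (hW : W ∈ Ws)
    (hreach : Relation.ReflTransGen Gs.dir Z1 W)
    (hnr : ¬ Relation.ReflTransGen Gs.dir Z1 X) : False := by
  obtain ⟨l, hch, hlast, hnd⟩ := exists_nodup_chain hreach
  have hXM : X ∉ Z1 :: l := by
    intro hx
    rcases List.mem_cons.mp hx with rfl | hx'
    · exact hnr Relation.ReflTransGen.refl
    · exact hnr (chain_mem_reach l Z1 hch X hx')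
  have hndL : (X :: Z1 :: l).Nodup := List.nodup_cons.mpr ⟨hXM, hnd⟩
  have hchain' : ∀ (i : ℕ) (h : i + 1 < l.length + 1),
      Gs.dir ((Z1 :: l).get ⟨i, by simp only [List.length_cons]; omega⟩)
        ((Z1 :: l).get ⟨i + 1, by simp only [List.length_cons]; omega⟩) := by
    have hc : List.Chain' Gs.dir (Z1 :: l) := hch
    intro i h
    exact List.isChain_iff_getElem.mp hc i (by simpa using h)
  let p : MPath (Fin d) Gs.dir Gs.bi (l.length + 1) :=
    { v := fun i => (X :: Z1 :: l).get ⟨i.val, by simpa using i.isLt⟩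
      e := fun k => if k.val = 0 then EdgeT.bid else EdgeT.fwd
      inj := by
        intro i j hij
        have h2 := List.nodup_iff_injective_get.mp hndL hij
        exact Fin.ext (congrArg Fin.val h2)
      valid_fwd := by
        intro k hk
        rcases k with ⟨kv, hkv⟩
        have hk0 : kv ≠ 0 := by
          intro h0
          subst h0
          exact absurd hk (by simp)
        obtain ⟨m, rfl⟩ : ∃ m, kv = m + 1 := ⟨kv - 1, by omega⟩
        exact hchain' m (by omega)
      valid_bwd := by
        intro k hk
        by_cases h0 : k.val = 0 <;> simp [h0] at hk
      valid_bid := by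
        intro k hk
        rcases k with ⟨kv, hkv⟩
        by_cases h0 : kv = 0
        · subst h0
          exact hbi
        · exfalso
          have h2 : (if kv = 0 then EdgeT.bid else EdgeT.fwd) = EdgeT.bid := hk
          rw [if_neg h0] at h2
          exact absurd h2 (by simp) }
  have hv0 : p.v 0 = X := rfl
  have hvlast : p.v (Fin.last (l.length + 1)) = W := by
    show ((X :: Z1 :: l).get ⟨l.length + 1, by simp⟩ : Fin d) = W
    have h2 : ((X :: Z1 :: l).getLast (by simp)) = W := by
      rw [List.getLast_cons_cons]; exact hlast
    rw [List.getLast_eq_getElem] at h2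
    simpa using h2
  have hbd : Gs.BackdoorStart p (Nat.succ_pos _) := Or.inr (Or.inl rfl)
  have h := hc2 (l.length + 1) (Nat.succ_pos _) p hv0 (by rw [hvlast]; exact hW) hbd
  apply h
  intro i h1 h2 hsc
  obtain ⟨-, hbwd, -, -⟩ := hsc
  have h3 : (if i = 0 then EdgeT.bid else EdgeT.fwd) = EdgeT.bwd := hbwd
  by_cases h0 : i = 0 <;> simp [h0] at h3

lemma seg_reach {V : Type} {dir bi : V → V → Prop} {n : ℕ} (p : MPath V dir bi n) (a : ℕ) :
    ∀ (b : ℕ) (hab : a ≤ b) (hb : b ≤ n),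
      (∀ (j : ℕ) (hj1 : a ≤ j) (hj2 : j < b) (hj : j < n), p.e ⟨j, hj⟩ = EdgeT.fwd) →
      Relation.ReflTransGen dir (p.v ⟨a, by omega⟩) (p.v ⟨b, by omega⟩) := by
  intro b hab
  induction b, hab using Nat.le_induction with
  | base => intro _ _; exact Relation.ReflTransGen.refl
  | succ m hm ih =>
    intro hb hf
    have rest := ih (by omega) (fun j h1 h2 hj => hf j h1 (by omega) hj)
    exact rest.tail (p.valid_fwd ⟨m, by omega⟩ (hf m hm (by omega) (by omega)))



/-- **Lemma 3.** Under Conditions 1–3 of the SCG-front-door criterion,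
if the self-loop `X → X` is the only directed cycle containing `X` and there is no
`Z ∈ Anc(X, Gs)` with `X ↔ Z`, then `lemma3Set` blocks every back-door path from
`X_{t-γ}` to `W_{t-λ}` and contains no descendant of `X_{t-γ}` in any candidate
FT-ADMG. -/
theorem lemma3 {d : ℕ} {t0 tmax : ℤ} {γmax : ℕ}
    (Gs : SCG d) (X Y : Fin d) (Ws : Set (Fin d))
    (hXY : X ≠ Y) (hXWs : X ∉ Ws) (hYWs : Y ∉ Ws)
    (γ : ℕ) (hγ : γ ≤ γmax) (t : ℤ)
    (ht0 : t0 ≤ t - (γ : ℤ) - (γmax : ℤ)) (ht : t ≤ tmax)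
    (hfd : Gs.FrontDoor123 X Y Ws)
    (hself : Gs.dir X X)
    (honly : ∀ Z, Relation.ReflTransGen Gs.dir X Z → Gs.dir Z X → Z = X)
    (hconf : ¬ ∃ Z, Relation.ReflTransGen Gs.dir Z X ∧ (Gs.bi X Z ∨ Gs.bi Z X)) :
    ∀ W ∈ Ws, ∀ ℓw : ℤ, 0 ≤ ℓw → ℓw ≤ (γ : ℤ) →
    ∀ G : FTADMG d t0 tmax γmax, IsCandidate Gs G →
      (∀ (n : ℕ) (hn : 0 < n) (p : MPath (Fin d × ℤ) G.dir G.bi n),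
        p.v 0 = (X, t - (γ : ℤ)) → p.v (Fin.last n) = (W, t - (γ : ℤ) + ℓw) →
        (p.e ⟨0, hn⟩).headLeft → p.BlockedBy (lemma3Set Gs X t γ γmax)) ∧
      (∀ b ∈ lemma3Set Gs X t γ γmax,
        ¬ Relation.ReflTransGen G.dir (X, t - (γ : ℤ)) b) := by
  obtain ⟨hc1, hc2, hc3⟩ := hfd
  intro W hW ℓw hℓw0 hℓwγ G hcand
  obtain ⟨hcd, hcb⟩ := hcand
  have macro_dir : ∀ a b : Fin d × ℤ, G.dir a b → Gs.dir a.1 b.1 := by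
    intro a b h
    exact (hcd a.1 b.1).mpr ⟨a.2, b.2, by simpa using h⟩
  have macro_bi : ∀ a b : Fin d × ℤ, G.bi a b → Gs.bi a.1 b.1 := by
    intro a b h
    exact (hcb a.1 b.1).mpr ⟨a.2, b.2, by simpa using h⟩
  have macro_reach : ∀ a b : Fin d × ℤ, Relation.ReflTransGen G.dir a b →
      Relation.ReflTransGen Gs.dir a.1 b.1 := by
    intro a b h
    induction h with
    | refl => exact Relation.ReflTransGen.refl
    | tail h1 h2 ih => exact ih.tail (macro_dir _ _ h2)
  have time_mono : ∀ a b : Fin d × ℤ, Relation.ReflTransGen G.dir a b → a.2 ≤ b.2 := by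
    intro a b h
    induction h with
    | refl => exact le_refl _
    | tail h1 h2 ih => exact ih.trans (G.dir_time _ _ h2).1
  have zset_anc : ∀ b ∈ lemma3Set Gs X t γ γmax, Relation.ReflTransGen Gs.dir b.1 X := by
    intro b hb
    rcases hb with ⟨ℓ, h0, hm, h2, hdir, hne⟩ | ⟨ℓ, h1, hm, hb⟩
    · exact Relation.ReflTransGen.single hdir
    · rw [hb]
  constructor
  · -- blocking part
    intro n hn p hv0 hvlast hhl
    cases he0 : p.e ⟨0, hn⟩ with
    | fwd =>
      rw [he0] at hhl
      exact absurd hhl (by simp [EdgeT.headLeft])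
    | bwd =>
      -- first edge is v1 → v0 : v1 is a parent of X_{t-γ}
      have hedge := p.valid_bwd ⟨0, hn⟩ he0
      rw [show ((⟨0, hn⟩ : Fin n).castSucc) = (0 : Fin (n + 1)) from rfl, hv0] at hedge
      -- hedge : G.dir (p.v ⟨1,_⟩) (X, t - γ)
      rcases Nat.lt_or_ge 1 n with hn2 | hn1
      · -- n ≥ 2 : v1 is a non-collider in the blocking set
        have hedge' : G.dir (p.v ⟨1, by omega⟩) (X, t - (γ : ℤ)) := hedge
        have ht1 : (p.v ⟨1, by omega⟩ : Fin d × ℤ).2 ≤ t - (γ : ℤ) := (G.dir_time _ _ hedge').1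
        have ht2 : t - (γ : ℤ) - (p.v ⟨1, by omega⟩ : Fin d × ℤ).2 ≤ (γmax : ℤ) :=
          (G.dir_time _ _ hedge').2
        have hmem : p.v ⟨1, by omega⟩ ∈ lemma3Set Gs X t γ γmax := by
          by_cases hBX : (p.v ⟨1, by omega⟩ : Fin d × ℤ).1 = X
          · right
            refine ⟨t - (γ : ℤ) - (p.v ⟨1, by omega⟩ : Fin d × ℤ).2, ?_, by omega, ?_⟩
            · -- v1 ≠ v0
              have hne : (p.v ⟨1, by omega⟩ : Fin d × ℤ) ≠ p.v 0 := by
                intro h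
                have := p.inj h
                simp [Fin.ext_iff] at this
              rw [hv0] at hne
              have : (p.v ⟨1, by omega⟩ : Fin d × ℤ).2 ≠ t - (γ : ℤ) := by
                intro h
                apply hne
                exact Prod.ext hBX h
              omega
            · refine Prod.ext hBX ?_
              simp
          · left
            refine ⟨t - (γ : ℤ) - (p.v ⟨1, by omega⟩ : Fin d × ℤ).2, by omega, by omega, by omega, ?_, hBX⟩
            exact macro_dir _ _ hedge
        refine ⟨1, one_pos, hn2, Or.inl ⟨?_, hmem⟩⟩
        rintro ⟨hcol1, -⟩
        rw [show p.e ⟨1 - 1, by omega⟩ = EdgeT.bwd from he0] at hcol1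
        exact hcol1
      · -- n = 1 : single-edge back-door path, contradicts Condition 2
        exfalso
        have hn1' : n = 1 := by omega
        subst hn1'
        rw [show ((⟨0, hn⟩ : Fin 1).succ) = Fin.last 1 from rfl, hvlast] at hedge
        exact cond2_single_bwd Gs X Ws hc2 W hW (fun h => hXWs (h ▸ hW)) (macro_dir _ _ hedge)
    | bid =>
      have hedge := p.valid_bid ⟨0, hn⟩ he0
      rw [show ((⟨0, hn⟩ : Fin n).castSucc) = (0 : Fin (n + 1)) from rfl, hv0] at hedge
      -- hedge : G.bi (X, t-γ) (p.v ⟨1,_⟩)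
      have hbiM : Gs.bi X (p.v ⟨1, by omega⟩ : Fin d × ℤ).1 := macro_bi _ _ hedge
      have hnr : ¬ Relation.ReflTransGen Gs.dir (p.v ⟨1, by omega⟩ : Fin d × ℤ).1 X :=
        fun h => hconf ⟨_, h, Or.inl hbiM⟩
      by_contra hnb
      have hcol_anc : ∀ (i : ℕ) (h1 : 0 < i) (h2 : i < n), p.Collider i h1 h2 →
          Relation.ReflTransGen Gs.dir (p.v ⟨i, by omega⟩ : Fin d × ℤ).1 X := by
        intro i h1 h2 hcol
        by_contra hnanc
        exact hnb ⟨i, h1, h2, Or.inr ⟨hcol, fun w hw hwZ =>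
          hnanc ((macro_reach _ _ hw).trans (zset_anc w hwZ))⟩⟩
      rcases Nat.lt_or_ge 1 n with hn2 | hn1
      · -- n ≥ 2
        have he1 : p.e ⟨1, hn2⟩ = EdgeT.fwd := by
          cases he1' : p.e ⟨1, hn2⟩ with
          | fwd => rfl
          | bwd =>
            exfalso
            refine hnr (hcol_anc 1 one_pos hn2 ⟨?_, ?_⟩)
            · rw [show p.e ⟨1 - 1, by omega⟩ = EdgeT.bid from he0]; trivial
            · rw [he1']; trivial
          | bid =>
            exfalso
            refine hnr (hcol_anc 1 one_pos hn2 ⟨?_, ?_⟩)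
            · rw [show p.e ⟨1 - 1, by omega⟩ = EdgeT.bid from he0]; trivial
            · rw [he1']; trivial
        have hall : ∀ k, 1 ≤ k → ∀ (hk : k < n), p.e ⟨k, hk⟩ = EdgeT.fwd := by
          intro k
          induction k using Nat.strong_induction_on with
          | _ k ih =>
            intro hk1 hk
            rcases Nat.eq_or_lt_of_le hk1 with heq | hlt
            · subst heq  -- wrong direction? heq : 1 = k
              exact he1
            · cases hek : p.e ⟨k, hk⟩ with
              | fwd => rfl
              | bwd =>
                exfalso
                have hleft : p.e ⟨k - 1, by omega⟩ = EdgeT.fwd := ih (k - 1) (by omega) (by omega) (by omega)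
                have hcol : p.Collider k (by omega) hk := ⟨by rw [hleft]; trivial, by rw [hek]; trivial⟩
                have hanc := hcol_anc k (by omega) hk hcol
                have hseg := seg_reach p 1 k (by omega) (by omega)
                  (fun j hj1 hj2 hj => ih j (by omega) hj1 hj)
                exact hnr ((macro_reach _ _ hseg).trans hanc)
              | bid =>
                exfalso
                have hleft : p.e ⟨k - 1, by omega⟩ = EdgeT.fwd := ih (k - 1) (by omega) (by omega) (by omega)
                have hcol : p.Collider k (by omega) hk := ⟨by rw [hleft]; trivial, by rw [hek]; trivial⟩
                have hanc := hcol_anc k (by omega) hk hcol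
                have hseg := seg_reach p 1 k (by omega) (by omega)
                  (fun j hj1 hj2 hj => ih j (by omega) hj1 hj)
                exact hnr ((macro_reach _ _ hseg).trans hanc)
        have hseg := seg_reach p 1 n (by omega) (by omega) (fun j h1 h2 hj => hall j h1 hj)
        have hmac := macro_reach _ _ hseg
        rw [show (⟨n, by omega⟩ : Fin (n + 1)) = Fin.last n from rfl, hvlast] at hmac
        exact cond2_contra Gs X Ws hc2 _ W hbiM hW hmac hnr
      · -- n = 1
        have hn1' : n = 1 := by omega
        subst hn1'
        have hv1 : (p.v ⟨1, by omega⟩ : Fin d × ℤ) = (W, t - (γ : ℤ) + ℓw) := hvlast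
        rw [hv1] at hbiM hnr
        exact cond2_contra Gs X Ws hc2 W W hbiM hW Relation.ReflTransGen.refl hnr
  · -- no descendants
    intro b hb hreach
    have h1 := time_mono _ _ hreach
    simp only at h1
    rcases hb with ⟨ℓ, hℓ0, hℓm, hb2, hdir, hne⟩ | ⟨ℓ, hℓ1, hℓm, hbeq⟩
    · exact hne (honly b.1 (macro_reach _ _ hreach) hdir)
    · rw [hbeq] at h1
      simp at h1
      omega
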